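/- arXiv:0912.3853 — 2 statements merged into one kernel-verified Lean document; each statement's English description precedes it below -/
import Mathlib

section
/- Let $R$ be a Noetherian ring of prime characteristic $p$, and let $\mathfrak{a}, J$ be ideals with $\mathfrak{a}\subseteq\sqrt J$. If for all sufficiently large $q=p^e$ the Frobenius power $J^{[q]}$ is Frobenius closed (i.e. $(J^{[q]})^F = J^{[q]}$), then the limit $\lim_{q\to\infty}\nu_{\mathfrak{a}}^J(q)/q$ exists, i.e. $\limsup_q \nu_{\mathfrak{a}}^J(q)/q = \liminf_q \nu_{\mathfrak{a}}^J(q)/q$. -/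
open Filter

noncomputable section

/-- The `q`-th Frobenius power `J^{[q]}` of an ideal: the ideal generated by
`q`-th powers of elements of `J`. -/
def Ideal.frobPow {R : Type*} [CommSemiring R] (J : Ideal R) (q : ℕ) : Ideal R :=
  Ideal.span ((fun x => x ^ q) '' (J : Set R))

/-- `ν_𝔞^J(q) = max {r | 𝔞^r ⊄ J^{[q]}}` (with value `0` if `𝔞 ⊆ J^{[q]}`). -/
def Ideal.fnu {R : Type*} [CommSemiring R] (𝔞 J : Ideal R) (q : ℕ) : ℕ :=
  sSup {r : ℕ | ¬ 𝔞 ^ r ≤ J.frobPow q}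

/-- `c₊^J(𝔞) = limsup_{q = pᵉ → ∞} ν_𝔞^J(q)/q`. -/
def Ideal.cplus {R : Type*} [CommSemiring R] (𝔞 J : Ideal R) (p : ℕ) : ℝ :=
  Filter.limsup (fun e : ℕ => (𝔞.fnu J (p ^ e) : ℝ) / (p ^ e : ℕ)) Filter.atTop

/-- `c₋^J(𝔞) = liminf_{q = pᵉ → ∞} ν_𝔞^J(q)/q`. -/
def Ideal.cminus {R : Type*} [CommSemiring R] (𝔞 J : Ideal R) (p : ℕ) : ℝ :=
  Filter.liminf (fun e : ℕ => (𝔞.fnu J (p ^ e) : ℝ) / (p ^ e : ℕ)) Filter.atTop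

/-- `x ∈ R°`, i.e. `x` lies outside every minimal prime of `R`. -/
def Ideal.memRcirc {R : Type*} [CommSemiring R] (x : R) : Prop :=
  ∀ P ∈ minimalPrimes R, x ∉ P

/-- The length of an `R`-module `M`, computed as the Krull dimension of its
lattice of submodules (converted to a natural number; `0` by convention in the
degenerate infinite cases). -/
def moduleLength (R M : Type*) [Ring R] [AddCommGroup M] [Module R M] : ℕ :=
  (WithBot.unbotD 0 (Order.krullDim (Submodule R M))).toNat

/-- The Hilbert–Samuel multiplicity of an ideal `I` in a `d`-dimensional ring:
`e(I) = lim_n d! · ℓ(R/Iⁿ)/n^d` (expressed as a `limsup` so as to be total). -/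
def Ideal.eMult {R : Type*} [CommRing R] (d : ℕ) (I : Ideal R) : ℝ :=
  Filter.limsup
    (fun n : ℕ => (d.factorial : ℝ) * (moduleLength R (R ⧸ I ^ n) : ℝ) / (n : ℝ) ^ d)
    Filter.atTop

end

section Aux

lemma span_pow_le_span_pow_image {R : Type*} [CommSemiring R] (q : ℕ) (s : Finset R) :
    (Ideal.span (s : Set R)) ^ (s.card * q + 1) ≤
      Ideal.span ((fun x => x ^ q) '' (s : Set R)) := by
  classical
  induction s using Finset.induction_on with
  | empty => simp
  | @insert a s ha ih =>
    rw [Finset.coe_insert, Ideal.span_insert, Finset.card_insert_of_notMem ha,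
      show (s.card + 1) * q + 1 = q + (s.card * q + 1) by ring]
    refine Ideal.sup_pow_add_le_pow_sup_pow.trans ?_
    rw [Ideal.span_singleton_pow]
    refine sup_le ?_ (ih.trans (Ideal.span_mono (Set.image_mono (by simp))))
    rw [Ideal.span_le]
    rintro x rfl
    exact Ideal.subset_span ⟨a, by simp⟩

/-- Existence of a linear bound on `fnu`. -/
lemma fnu_bound {R : Type*} [CommRing R] [IsNoetherianRing R] (𝔞 J : Ideal R)
    (hrad : 𝔞 ≤ J.radical) :
    ∃ C : ℕ, ∀ q : ℕ, 1 ≤ q →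
      (BddAbove {r : ℕ | ¬ 𝔞 ^ r ≤ J.frobPow q} ∧ 𝔞.fnu J q ≤ C * q) := by
  obtain ⟨N, hN⟩ := Ideal.exists_pow_le_of_le_radical_of_fg_radical hrad
    (IsNoetherian.noetherian _)
  obtain ⟨s, hs⟩ := IsNoetherian.noetherian J
  refine ⟨N * (s.card + 1), fun q hq => ?_⟩
  have key : 𝔞 ^ (N * (s.card * q + 1)) ≤ J.frobPow q := by
    rw [pow_mul]
    calc (𝔞 ^ N) ^ (s.card * q + 1) ≤ J ^ (s.card * q + 1) := Ideal.pow_right_mono hN _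
      _ = (Ideal.span (s : Set R)) ^ (s.card * q + 1) := by rw [← hs]
      _ ≤ Ideal.span ((fun x => x ^ q) '' (s : Set R)) := span_pow_le_span_pow_image q s
      _ ≤ J.frobPow q := by
          refine Ideal.span_mono (Set.image_mono ?_)
          rw [← hs]; exact Ideal.subset_span
  have hb : ∀ r ∈ {r : ℕ | ¬ 𝔞 ^ r ≤ J.frobPow q}, r ≤ N * (s.card * q + 1) := by
    intro r hr
    by_contra hcon
    exact hr ((Ideal.pow_le_pow_right (le_of_lt (not_le.mp hcon))).trans key)
  have hbdd : BddAbove {r : ℕ | ¬ 𝔞 ^ r ≤ J.frobPow q} := ⟨_, hb⟩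
  refine ⟨hbdd, ?_⟩
  have hfnu : 𝔞.fnu J q ≤ N * (s.card * q + 1) := by
    rcases Set.eq_empty_or_nonempty {r : ℕ | ¬ 𝔞 ^ r ≤ J.frobPow q} with hS | hS
    · rw [Ideal.fnu, hS]
      simp
    · exact csSup_le hS hb
  refine hfnu.trans ?_
  have h1 : s.card * q + 1 ≤ (s.card + 1) * q := by nlinarith
  calc N * (s.card * q + 1) ≤ N * ((s.card + 1) * q) := Nat.mul_le_mul_left N h1
    _ = N * (s.card + 1) * q := (mul_assoc _ _ _).symm

end Aux

/-- if the Frobenius powers `J^{[q]}` are Frobenius closed for all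
large `q = pᵉ`, then the `F`-threshold `lim ν_𝔞^J(q)/q` exists, i.e.
limsup = liminf. -/
theorem fthreshold_exists_of_frobClosed {R : Type*} [CommRing R] [IsNoetherianRing R]
    (p : ℕ) [Fact p.Prime] [CharP R p] (𝔞 J : Ideal R)
    (hrad : 𝔞 ≤ J.radical)
    (hclosed : ∀ᶠ e : ℕ in Filter.atTop, ∀ x : R,
      (∃ e' : ℕ, x ^ p ^ e' ∈ (J.frobPow (p ^ e)).frobPow (p ^ e')) →
        x ∈ J.frobPow (p ^ e)) :
    𝔞.cplus J p = 𝔞.cminus J p := by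
  have hp : 1 < p := (Fact.out : p.Prime).one_lt
  obtain ⟨C, hC⟩ := fnu_bound 𝔞 J hrad
  set f : ℕ → ℝ := fun e : ℕ => (𝔞.fnu J (p ^ e) : ℝ) / ((p ^ e : ℕ) : ℝ) with hf
  have hq1 : ∀ e : ℕ, 1 ≤ p ^ e := fun e => Nat.one_le_pow _ _ (by omega)
  have hqpos : ∀ e : ℕ, (0 : ℝ) < ((p ^ e : ℕ) : ℝ) := fun e => by
    exact_mod_cast Nat.lt_of_lt_of_le Nat.zero_lt_one (hq1 e)
  have h0 : ∀ e, 0 ≤ f e := fun e => div_nonneg (Nat.cast_nonneg _) (le_of_lt (hqpos e))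
  have hCb : ∀ e, f e ≤ (C : ℝ) := by
    intro e
    rw [hf, div_le_iff₀ (hqpos e)]
    exact_mod_cast (hC (p ^ e) (hq1 e)).2
  obtain ⟨E, hE⟩ := eventually_atTop.mp hclosed
  have hmono : ∀ e, E ≤ e → f e ≤ f (e + 1) := by
    intro e he
    rcases Set.eq_empty_or_nonempty {r : ℕ | ¬ 𝔞 ^ r ≤ J.frobPow (p ^ e)} with hS | hS
    · have h00 : 𝔞.fnu J (p ^ e) = 0 := by rw [Ideal.fnu, hS]; simp
      calc f e = 0 := by rw [hf]; simp [Ideal.fnu, hS]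
        _ ≤ f (e + 1) := h0 _
    · have hrmem : 𝔞.fnu J (p ^ e) ∈ {r : ℕ | ¬ 𝔞 ^ r ≤ J.frobPow (p ^ e)} :=
        Nat.sSup_mem hS (hC _ (hq1 e)).1
      set r := 𝔞.fnu J (p ^ e) with hr
      have hmem : ¬ 𝔞 ^ (p * r) ≤ J.frobPow (p ^ (e + 1)) := by
        intro hle
        obtain ⟨x, hxa, hxJ⟩ := SetLike.not_le_iff_exists.mp hrmem
        apply hxJ
        apply hE e he x
        refine ⟨1, ?_⟩
        have hx : x ^ p ∈ 𝔞 ^ (p * r) := by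
          rw [mul_comm, pow_mul]
          exact Ideal.pow_mem_pow hxa p
        have hxe : x ^ p ∈ J.frobPow (p ^ (e + 1)) := hle hx
        have hsub : J.frobPow (p ^ (e + 1)) ≤ (J.frobPow (p ^ e)).frobPow (p ^ 1) := by
          rw [Ideal.frobPow, Ideal.span_le]
          rintro _ ⟨y, hy, rfl⟩
          have h1 : (y : R) ^ p ^ e ∈ J.frobPow (p ^ e) :=
            Ideal.subset_span ⟨y, hy, rfl⟩
          have h2 : ((y ^ p ^ e) ^ p ^ 1) ∈ (J.frobPow (p ^ e)).frobPow (p ^ 1) :=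
            Ideal.subset_span ⟨_, h1, rfl⟩
          have h3 : (fun x => x ^ p ^ (e + 1)) y = (y ^ p ^ e) ^ p ^ 1 := by
            simp only [← pow_mul, ← pow_add]
          rw [h3]
          exact h2
        simpa using hsub hxe
      have hle2 : p * r ≤ 𝔞.fnu J (p ^ (e + 1)) := le_csSup (hC _ (hq1 _)).1 hmem
      rw [hf]
      simp only
      rw [div_le_div_iff₀ (hqpos e) (hqpos (e + 1))]
      have hcast : ((𝔞.fnu J (p ^ e) : ℝ)) * ((p ^ (e + 1) : ℕ) : ℝ)
          = ((p * r : ℕ) : ℝ) * ((p ^ e : ℕ) : ℝ) := by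
        push_cast
        ring
      rw [hcast]
      have := hle2
      have hle3 : ((p * r : ℕ) : ℝ) ≤ (𝔞.fnu J (p ^ (e + 1)) : ℝ) := by exact_mod_cast hle2
      exact mul_le_mul_of_nonneg_right hle3 (le_of_lt (hqpos e))
  have hg : Monotone fun n => f (n + E) := by
    apply monotone_nat_of_le_succ
    intro n
    have := hmono (n + E) (Nat.le_add_left _ _)
    calc f (n + E) ≤ f (n + E + 1) := this
      _ = f (n + 1 + E) := by rw [Nat.add_right_comm]
  have hbdd : BddAbove (Set.range fun n => f (n + E)) := by
    refine ⟨(C : ℝ), ?_⟩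
    rintro _ ⟨n, rfl⟩
    exact hCb _
  have ht := tendsto_atTop_ciSup hg hbdd
  have ht' : Filter.Tendsto f Filter.atTop (nhds (⨆ n, f (n + E))) :=
    (Filter.tendsto_add_atTop_iff_nat E).mp ht
  rw [Ideal.cplus, Ideal.cminus]
  exact ht'.limsup_eq.trans ht'.liminf_eq.symm
end

section
/- Let $R$ be a commutative ring, $J\subseteq R$ an ideal generated by a regular sequence $f_1,\dots,f_d$, and $x_1,\dots,x_i$ elements of $R$ forming a regular sequence. Let $I\subseteq R$ be an ideal, $c\in R$, and suppose $cI\subseteq J$. If the induced map $\mathrm{Tor}_i^R(R/I, R/(x_1,\dots,x_i)) \to \mathrm{Tor}_i^R(R/J, R/(x_1,\dots,x_i))$ given by multiplication by $c$ is zero, then for every element $y\in (I :_R (x_1,\dots,x_i))$ one has $cy \in J$. More precisely, multiplication by $c$ induces the map $(I:_R(x_1,\dots,x_i))/I' \to (J:_R(x_1,\dots,x_i))/J$ on the top Koszul homology, where the Tor modules are computed via the Koszul complex on $x_1,\dots,x_i$. -/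
open CategoryTheory

section Koszul
variable (R : Type) [CommRing R]

/-- The underlying modules of the Koszul complex, defined recursively as iterated cones. -/
def KM : ℕ → ℕ → Type
  | 0, 0 => R
  | 0, _+1 => PUnit
  | n+1, 0 => KM n 0
  | n+1, k+1 => KM n (k+1) × KM n k

def KMacg : ∀ n k, AddCommGroup (KM R n k)
  | 0, 0 => inferInstanceAs (AddCommGroup R)
  | 0, _+1 => inferInstanceAs (AddCommGroup PUnit)
  | n+1, 0 => KMacg n 0
  | n+1, k+1 =>
    letI := KMacg n (k+1); letI := KMacg n k
    inferInstanceAs (AddCommGroup (KM R n (k+1) × KM R n k))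

attribute [instance] KMacg

def KMmod : ∀ n k, Module R (KM R n k)
  | 0, 0 => inferInstanceAs (Module R R)
  | 0, _+1 => inferInstanceAs (Module R PUnit)
  | n+1, 0 => KMmod n 0
  | n+1, k+1 =>
    letI := KMmod n (k+1); letI := KMmod n k
    inferInstanceAs (Module R (KM R n (k+1) × KM R n k))

attribute [instance] KMmod

def KMfree : ∀ n k, Module.Free R (KM R n k)
  | 0, 0 => inferInstanceAs (Module.Free R R)
  | 0, _+1 => inferInstanceAs (Module.Free R PUnit)
  | n+1, 0 => KMfree n 0
  | n+1, k+1 =>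
    letI := KMfree n (k+1); letI := KMfree n k
    inferInstanceAs (Module.Free R (KM R n (k+1) × KM R n k))

attribute [instance] KMfree

omit [CommRing R] in
lemma KM_subsingleton : ∀ n k, n < k → Subsingleton (KM R n k)
  | 0, _+1, _ => inferInstanceAs (Subsingleton PUnit)
  | n+1, k+1, h =>
    letI := KM_subsingleton n (k+1) (lt_trans (Nat.lt_succ_self _) h)
    letI := KM_subsingleton n k (Nat.lt_of_succ_lt_succ h)
    inferInstanceAs (Subsingleton (KM R n (k+1) × KM R n k))

/-- Identification of the degree-0 part with `R`. -/
def KM0 : ∀ n, KM R n 0 ≃ₗ[R] R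
  | 0 => LinearEquiv.refl R R
  | n+1 => KM0 n

lemma KM0_succ (n : ℕ) : KM0 R (n+1) = KM0 R n := rfl

variable {R}

/-- The Koszul differential. -/
def KD : {n : ℕ} → (x : Fin n → R) → (k : ℕ) → (KM R n (k+1) →ₗ[R] KM R n k)
  | 0, _, _ => 0
  | n+1, x, 0 =>
    (KD (Fin.init x) 0).coprod
      (x (Fin.last n) • (LinearMap.id : KM R n 0 →ₗ[R] KM R n 0))
  | n+1, x, k+1 =>
    LinearMap.prod
      ((KD (Fin.init x) (k+1)).coprod
        (x (Fin.last n) • (LinearMap.id : KM R n (k+1) →ₗ[R] KM R n (k+1))))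
      ((-(KD (Fin.init x) k)).comp (LinearMap.snd R (KM R n (k+2)) (KM R n (k+1))))

lemma KD_zero_fn (x : Fin 0 → R) (k : ℕ) : KD x k = 0 := rfl

lemma KD_succ_zero {n : ℕ} (x : Fin (n+1) → R) (a : KM R n 1) (b : KM R n 0) :
    KD x 0 (a, b) = KD (Fin.init x) 0 a + x (Fin.last n) • b := rfl

lemma KD_succ_succ {n : ℕ} (x : Fin (n+1) → R) (k : ℕ) (a : KM R n (k+2)) (b : KM R n (k+1)) :
    KD x (k+1) (a, b) =
      (KD (Fin.init x) (k+1) a + x (Fin.last n) • b, - KD (Fin.init x) k b) := rfl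

lemma KD_comp : ∀ {n : ℕ} (x : Fin n → R) (k : ℕ) (z : KM R n (k+2)),
    KD x k (KD x (k+1) z) = 0
  | 0, x, k, z => by
      have : Subsingleton (KM R 0 (k+1)) := KM_subsingleton R 0 (k+1) (Nat.succ_pos _)
      rw [Subsingleton.elim (KD x (k+1) z) 0, map_zero]
  | n+1, x, 0, (a, b) => by
      rw [KD_succ_succ, KD_succ_zero, map_add, KD_comp (Fin.init x) 0 a, map_smul]
      simp
      rfl
  | n+1, x, k+1, (a, b) => by
      have h1 := KD_comp (Fin.init x) (k+1) a
      have h2 := KD_comp (Fin.init x) k b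
      rw [KD_succ_succ, KD_succ_succ]
      refine Prod.ext ?_ ?_
      · show KD (Fin.init x) (k+1) (KD (Fin.init x) (k+2) a + x (Fin.last n) • b)
            + x (Fin.last n) • (-(KD (Fin.init x) (k+1) b)) = 0
        rw [map_add, h1, map_smul]
        simp
      · show -(KD (Fin.init x) k (-(KD (Fin.init x) (k+1) b))) = 0
        rw [map_neg, neg_neg, h2]

lemma range_init_union {n : ℕ} (x : Fin (n+1) → R) :
    Set.range x = Set.range (Fin.init x) ∪ {x (Fin.last n)} := by
  ext r
  constructor
  · rintro ⟨j, rfl⟩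
    rcases Fin.eq_castSucc_or_eq_last j with ⟨j', rfl⟩ | rfl
    · exact Or.inl ⟨j', rfl⟩
    · exact Or.inr rfl
  · rintro (⟨j, rfl⟩ | rfl)
    · exact ⟨j.castSucc, rfl⟩
    · exact ⟨Fin.last n, rfl⟩

/-- The range of the bottom Koszul differential is the ideal spanned by the sequence. -/
lemma KD_range : ∀ {n : ℕ} (x : Fin n → R),
    LinearMap.range ((KM0 R n).toLinearMap ∘ₗ KD x 0) = (Ideal.span (Set.range x) : Submodule R R)
  | 0, x => by
      rw [KD_zero_fn]
      have : Set.range x = ∅ := by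
        ext r; simp [Fin.isEmpty']
      rw [this, Ideal.span_empty]
      simp
  | n+1, x => by
      rw [range_init_union, Ideal.span_union]
      apply le_antisymm
      · rintro r ⟨⟨a, b⟩, rfl⟩
        show (KM0 R n) (KD (Fin.init x) 0 a + x (Fin.last n) • b) ∈ _
        rw [map_add, map_smul]
        apply Submodule.add_mem
        · exact Submodule.mem_sup_left ((KD_range (Fin.init x)) ▸ ⟨a, rfl⟩)
        · apply Submodule.mem_sup_right
          exact Ideal.mem_span_singleton.mpr ⟨KM0 R n b, rfl⟩
      · apply sup_le
        · rw [← KD_range (Fin.init x)]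
          rintro r ⟨a, rfl⟩
          refine ⟨(a, 0), ?_⟩
          show (KM0 R (n+1)) (KD x 0 (a, 0)) = _
          rw [KD_succ_zero, KM0_succ, smul_zero, add_zero]
          rfl
        · rintro r hr
          obtain ⟨s, rfl⟩ := Ideal.mem_span_singleton.mp hr
          refine ⟨(0, (KM0 R n).symm s), ?_⟩
          show (KM0 R (n+1)) (KD x 0 (0, (KM0 R n).symm s)) = _
          rw [KD_succ_zero, KM0_succ, map_zero, zero_add]
          refine ((KM0 R n).map_smul _ _).trans ?_
          show x (Fin.last n) • ((KM0 R n) ((KM0 R n).symm s)) = _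
          rw [LinearEquiv.apply_symm_apply, smul_eq_mul]

end Koszul

section KoszulExact
variable {R : Type} [CommRing R]

/-- Elementwise regularity of a finite sequence. -/
def Reg {n : ℕ} (x : Fin n → R) : Prop :=
  ∀ (m : ℕ) (hm : m < n) (r : R),
    x ⟨m, hm⟩ * r ∈ Ideal.span (Set.range fun j : Fin m => x ⟨j.1, lt_trans j.2 hm⟩) →
    r ∈ Ideal.span (Set.range fun j : Fin m => x ⟨j.1, lt_trans j.2 hm⟩)

lemma Reg.init {n : ℕ} {x : Fin (n+1) → R} (hx : Reg x) : Reg (Fin.init x) :=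
  fun m hm r h => hx m (lt_trans hm (Nat.lt_succ_self n)) r h

lemma Reg.last {n : ℕ} {x : Fin (n+1) → R} (hx : Reg x) (r : R)
    (h : x (Fin.last n) * r ∈ Ideal.span (Set.range (Fin.init x))) :
    r ∈ Ideal.span (Set.range (Fin.init x)) :=
  hx n (Nat.lt_succ_self n) r h

lemma KD_exact : ∀ {n : ℕ} (x : Fin n → R), Reg x →
    ∀ (k : ℕ) (z : KM R n (k+1)), KD x k z = 0 → ∃ w, KD x (k+1) w = z
  | 0, x, _, k, z, _ => by
      have : Subsingleton (KM R 0 (k+1)) := KM_subsingleton R 0 (k+1) (Nat.succ_pos _)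
      exact ⟨0, Subsingleton.elim _ _⟩
  | n+1, x, hx, 0, (a, b), hz => by
      rw [KD_succ_zero] at hz
      have hmem : (KM0 R n) b ∈ Ideal.span (Set.range (Fin.init x)) := by
        apply hx.last
        rw [← KD_range (Fin.init x)]
        have h0 : (KM0 R n) (KD (Fin.init x) 0 a) + x (Fin.last n) • (KM0 R n) b = 0 := by
          rw [← map_smul, ← map_add, hz]
          exact map_zero (KM0 R n)
        have : x (Fin.last n) * (KM0 R n) b = ((KM0 R n).toLinearMap ∘ₗ KD (Fin.init x) 0) (-a) := by
          show _ = (KM0 R n) (KD (Fin.init x) 0 (-a))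
          rw [map_neg, map_neg, ← smul_eq_mul]
          exact eq_neg_of_add_eq_zero_right h0
        exact this ▸ LinearMap.mem_range_self _ _
      rw [← KD_range (Fin.init x)] at hmem
      obtain ⟨b₁, hb₁⟩ := hmem
      have hb₁' : KD (Fin.init x) 0 b₁ = b := (KM0 R n).injective hb₁
      have hcyc : KD (Fin.init x) 0 (a + x (Fin.last n) • b₁) = 0 := by
        rw [map_add, map_smul, hb₁', hz]
        rfl
      obtain ⟨a₁, ha₁⟩ := KD_exact (Fin.init x) hx.init 0 _ hcyc
      refine ⟨(a₁, -b₁), ?_⟩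
      rw [KD_succ_succ, ha₁, map_neg, hb₁']
      refine Prod.ext ?_ ?_ <;> simp
  | n+1, x, hx, k+1, (a, b), hz => by
      rw [KD_succ_succ] at hz
      have hb : KD (Fin.init x) k b = 0 := by
        have := congrArg Prod.snd hz
        exact neg_eq_zero.mp this
      obtain ⟨b₁, hb₁⟩ := KD_exact (Fin.init x) hx.init k b hb
      have ha : KD (Fin.init x) (k+1) (a + x (Fin.last n) • b₁) = 0 := by
        have := congrArg Prod.fst hz
        rw [map_add, map_smul, hb₁]
        exact this
      obtain ⟨a₁, ha₁⟩ := KD_exact (Fin.init x) hx.init (k+1) _ ha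
      refine ⟨(a₁, -b₁), ?_⟩
      rw [KD_succ_succ, ha₁, map_neg]
      refine Prod.ext ?_ ?_ <;> simp [hb₁]

end KoszulExact

section KoszulTop
variable (R : Type) [CommRing R]

def Ktop : ∀ n, KM R n n
  | 0 => (1 : R)
  | n+1 => ((0 : KM R n (n+1+1-1)), Ktop n)

def Ktopcoef : ∀ n, KM R n n →ₗ[R] R
  | 0 => (KM0 R 0).toLinearMap
  | n+1 => (Ktopcoef n).comp (LinearMap.snd R (KM R n (n+1)) (KM R n n))

lemma Ktopcoef_Ktop : ∀ n, Ktopcoef R n (Ktop R n) = 1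
  | 0 => rfl
  | n+1 => Ktopcoef_Ktop n

variable {R}

lemma tmul_KD_Ktop_eq_zero : ∀ (n : ℕ) (x : Fin (n+1) → R) (M : Type) (_ : AddCommGroup M)
    (_ : Module R M) (m : M), (∀ j, x j • m = 0) →
    m ⊗ₜ[R] (KD x n (Ktop R (n+1))) = (0 : TensorProduct R M (KM R (n+1) n))
  | 0, x, M, _, _, m, hm => by
      show m ⊗ₜ[R] (KD x 0 ((0 : KM R 0 1), Ktop R 0)) = 0
      rw [KD_succ_zero, map_zero]
      have h0 : (0 : KM R 0 0) + x (Fin.last 0) • Ktop R 0 = x (Fin.last 0) • Ktop R 0 :=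
        zero_add _
      rw [h0]
      show m ⊗ₜ[R] (x (Fin.last 0) • Ktop R 0 : KM R 0 0) = (0 : TensorProduct R M (KM R 0 0))
      rw [← TensorProduct.smul_tmul, hm (Fin.last 0), TensorProduct.zero_tmul]
  | n+1, x, M, _, _, m, hm => by
      show m ⊗ₜ[R] (KD x (n+1) ((0 : KM R (n+1) (n+2)), Ktop R (n+1))) = 0
      rw [KD_succ_succ, map_zero, zero_add]
      show m ⊗ₜ[R] (((x (Fin.last (n+1)) • Ktop R (n+1) : KM R (n+1) (n+1)),
            (- KD (Fin.init x) n (Ktop R (n+1)) : KM R (n+1) n)) :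
          KM R (n+1) (n+1) × KM R (n+1) n)
        = (0 : TensorProduct R M (KM R (n+1) (n+1) × KM R (n+1) n))
      apply (TensorProduct.prodRight R R M (KM R (n+1) (n+1)) (KM R (n+1) n)).injective
      rw [map_zero, TensorProduct.prodRight_tmul]
      have h1 : m ⊗ₜ[R] (x (Fin.last (n+1)) • Ktop R (n+1)) =
          (0 : TensorProduct R M (KM R (n+1) (n+1))) := by
        rw [← TensorProduct.smul_tmul, hm (Fin.last (n+1)), TensorProduct.zero_tmul]
      have h2 := tmul_KD_Ktop_eq_zero n (Fin.init x) M ‹_› ‹_› m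
        (fun j => show Fin.init x j • m = 0 from hm j.castSucc)
      rw [show (0 : TensorProduct R M (KM R (n+1) (n+1)) × TensorProduct R M (KM R (n+1) n))
        = (0, 0) from rfl]
      refine Prod.ext ?_ ?_
      · exact h1
      · show m ⊗ₜ[R] (- KD (Fin.init x) n (Ktop R (n+1))) = 0
        rw [TensorProduct.tmul_neg, h2, neg_zero]

lemma ideal_smul_top_eq (I : Ideal R) : (I • (⊤ : Submodule R R)) = I := by
  apply le_antisymm
  · rw [Submodule.smul_le]
    intro r hr m _
    rw [smul_eq_mul]
    exact Ideal.mul_mem_right m I hr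
  · intro a ha
    simpa using Submodule.smul_mem_smul ha (Submodule.mem_top (x := (1:R)))

lemma take_ofFn {n : ℕ} (x : Fin n → R) (m : ℕ) (hm : m < n) :
    List.take m (List.ofFn x) = List.ofFn (fun j : Fin m => x ⟨j.1, lt_trans j.2 hm⟩) := by
  apply List.ext_getElem
  · simp [Nat.min_eq_left hm.le]
  · intro j h1 h2
    rw [List.getElem_take, List.getElem_ofFn, List.getElem_ofFn]

lemma reg_of_isRegular {n : ℕ} (x : Fin n → R)
    (hx : RingTheory.Sequence.IsWeaklyRegular R (List.ofFn x)) : Reg x := by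
  rw [RingTheory.Sequence.isWeaklyRegular_iff_Fin] at hx
  intro m hm r h
  have hlen : m < (List.ofFn x).length := by simpa using hm
  have hreg := hx ⟨m, hlen⟩
  set I := Ideal.span (Set.range fun j : Fin m => x ⟨j.1, lt_trans j.2 hm⟩) with hI
  have hIdeal : Ideal.ofList (List.take m (List.ofFn x)) = I := by
    rw [take_ofFn x m hm, hI]
    unfold Ideal.ofList
    congr 1
    ext r
    simp only [Set.mem_setOf_eq, List.mem_ofFn]
    rfl
  have hsmul : (Ideal.ofList (List.take ((⟨m, hlen⟩ : Fin (List.ofFn x).length).1) (List.ofFn x)) •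
      (⊤ : Submodule R R)) = (I : Submodule R R) := by
    show (Ideal.ofList (List.take m (List.ofFn x)) • (⊤ : Submodule R R)) = _
    rw [hIdeal, ideal_smul_top_eq]
  have hx' : (List.ofFn x)[(⟨m, hlen⟩ : Fin (List.ofFn x).length)] = x ⟨m, hm⟩ := by
    simp
  rw [hx'] at hreg
  have heq : x ⟨m, hm⟩ • Submodule.Quotient.mk (p := Ideal.ofList
        (List.take ((⟨m, hlen⟩ : Fin (List.ofFn x).length).1) (List.ofFn x)) •
        (⊤ : Submodule R R)) r
      = x ⟨m, hm⟩ • Submodule.Quotient.mk 0 := by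
    rw [Submodule.Quotient.mk_zero, smul_zero, ← Submodule.Quotient.mk_smul,
      Submodule.Quotient.mk_eq_zero, hsmul, smul_eq_mul]
    exact h
  have hrr := hreg heq
  rw [Submodule.Quotient.eq, sub_zero, hsmul] at hrr
  exact hrr

end KoszulTop

section KoszulComplexCat
open CategoryTheory

variable {R : Type} [CommRing R]

noncomputable def KC {n : ℕ} (x : Fin n → R) : ChainComplex (ModuleCat R) ℕ :=
  ChainComplex.of (fun k => ModuleCat.of R (KM R n k))
    (fun k => ModuleCat.ofHom (KD x k))
    (fun k => by
      apply ModuleCat.hom_ext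
      apply LinearMap.ext
      intro z
      exact KD_comp x (k) z)

lemma KC_X {n : ℕ} (x : Fin n → R) (k : ℕ) : (KC x).X k = ModuleCat.of R (KM R n k) := rfl

lemma KC_d {n : ℕ} (x : Fin n → R) (k : ℕ) :
    (KC x).d (k+1) k = ModuleCat.ofHom (KD x k) := by
  simp [KC, ChainComplex.of_d]

instance KC_projective {n : ℕ} (x : Fin n → R) (k : ℕ) : Projective ((KC x).X k) :=
  (IsProjective.iff_projective (KM R n k)).mp inferInstance

noncomputable def Kε {n : ℕ} (x : Fin n → R) :
    (KC x).X 0 ⟶ ModuleCat.of R (R ⧸ Ideal.span (Set.range x)) :=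
  ModuleCat.ofHom ((Ideal.span (Set.range x)).mkQ.comp (KM0 R n).toLinearMap)

lemma KC_d10 {n : ℕ} (x : Fin n → R) : (KC x).d 1 0 = ModuleCat.ofHom (KD x 0) := KC_d x 0

lemma Kε_d {n : ℕ} (x : Fin n → R) : (KC x).d 1 0 ≫ Kε x = 0 := by
  rw [KC_d10]
  apply ModuleCat.hom_ext
  apply LinearMap.ext
  intro z
  show (Ideal.span (Set.range x)).mkQ ((KM0 R n) (KD x 0 z)) = 0
  rw [Submodule.mkQ_apply, Submodule.Quotient.mk_eq_zero]
  rw [← KD_range x]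
  exact ⟨z, rfl⟩

noncomputable def Kπ {n : ℕ} (x : Fin n → R) :
    KC x ⟶ (ChainComplex.single₀ (ModuleCat R)).obj
      (ModuleCat.of R (R ⧸ Ideal.span (Set.range x))) :=
  (ChainComplex.toSingle₀Equiv _ _).symm ⟨Kε x, Kε_d x⟩

lemma Kπ_f_zero {n : ℕ} (x : Fin n → R) : (Kπ x).f 0 = Kε x :=
  ChainComplex.toSingle₀Equiv_symm_apply_f_zero _ _

lemma KC_exactAt {n : ℕ} (x : Fin n → R) (hx : Reg x) (k : ℕ) : (KC x).ExactAt (k+1) := by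
  rw [(KC x).exactAt_iff' (k+2) (k+1) k (by simp [ChainComplex.prev])
    (by simp [ChainComplex.next_nat_succ])]
  rw [ShortComplex.moduleCat_exact_iff]
  intro z hz
  have hz' : KD x k z = 0 := by
    have : ((KC x).d (k+1) k) z = 0 := hz
    rwa [KC_d] at this
  obtain ⟨w, hw⟩ := KD_exact x hx k z hz'
  refine ⟨w, ?_⟩
  show ((KC x).d (k+2) (k+1)) w = z
  rw [KC_d]
  exact hw

noncomputable def Kres {n : ℕ} (x : Fin n → R) (hx : Reg x) :
    ProjectiveResolution (ModuleCat.of R (R ⧸ Ideal.span (Set.range x))) where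
  complex := KC x
  π := Kπ x
  quasiIso := ⟨fun i => by
    match i with
    | 0 =>
      rw [ChainComplex.quasiIsoAt₀_iff, ShortComplex.quasiIso_iff_of_zeros']
      rotate_left
      · exact (KC x).shape 0 0 (by simp)
      · exact (HomologicalComplex.single_obj_d (ComplexShape.down ℕ) 0 _ 1 0)
      · exact (HomologicalComplex.single_obj_d (ComplexShape.down ℕ) 0 _ 0 0)
      have hτ : ((HomologicalComplex.shortComplexFunctor' (ModuleCat R)
          (ComplexShape.down ℕ) 1 0 0).map (Kπ x)).τ₂ = Kε x := Kπ_f_zero x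
      constructor
      · rw [ShortComplex.moduleCat_exact_iff]
        intro z hz
        have hz' : Kε x z = 0 := by rw [← hτ]; exact hz
        have hmem : (KM0 R n) z ∈ (Ideal.span (Set.range x) : Submodule R R) := by
          have : (Ideal.span (Set.range x)).mkQ ((KM0 R n) z) = 0 := hz'
          rwa [Submodule.mkQ_apply, Submodule.Quotient.mk_eq_zero] at this
        rw [← KD_range x] at hmem
        obtain ⟨w, hw⟩ := hmem
        refine ⟨w, ?_⟩
        show ((KC x).d 1 0) w = z
        rw [KC_d10]
        exact (KM0 R n).injective hw
      · rw [ModuleCat.epi_iff_surjective, hτ]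
        intro q
        obtain ⟨r, rfl⟩ := Submodule.mkQ_surjective _ q
        refine ⟨(KM0 R n).symm r, ?_⟩
        show (Ideal.span (Set.range x)).mkQ ((KM0 R n) ((KM0 R n).symm r)) = _
        rw [LinearEquiv.apply_symm_apply]
    | (k+1) =>
      rw [quasiIsoAt_iff_exactAt' (Kπ x) (k+1)
        (HomologicalComplex.exactAt_single_obj _ _ _ _ (by omega))]
      exact KC_exactAt x hx k⟩

end KoszulComplexCat

section MainGlue
open CategoryTheory MonoidalCategory

variable {R : Type} [CommRing R]

lemma tensor_subsingleton (M N : Type) [AddCommGroup M] [Module R M]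
    [AddCommGroup N] [Module R N] [Subsingleton N] : Subsingleton (TensorProduct R M N) := by
  constructor
  intro a b
  have hz : ∀ z : TensorProduct R M N, z = 0 := by
    intro z
    induction z using TensorProduct.induction_on with
    | zero => rfl
    | tmul m n => rw [Subsingleton.elim n 0, TensorProduct.tmul_zero]
    | add u v hu hv => rw [hu, hv, add_zero]
  rw [hz a, hz b]

/-- The Koszul complex tensored with a module. -/
noncomputable def Lcx {n : ℕ} (x : Fin n → R) (M : ModuleCat R) :
    ChainComplex (ModuleCat R) ℕ :=
  (((MonoidalCategory.tensoringLeft (ModuleCat R)).obj M).mapHomologicalComplex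
    (ComplexShape.down ℕ)).obj (KC x)

/-- The map of short complexes at degree `i` induced by `φ : M₁ ⟶ M₂`. -/
noncomputable def ψdef {n : ℕ} (x : Fin n → R) {M₁ M₂ : ModuleCat R} (φ : M₁ ⟶ M₂) (i : ℕ) :
    (Lcx x M₁).sc i ⟶ (Lcx x M₂).sc i :=
  (HomologicalComplex.shortComplexFunctor (ModuleCat R) (ComplexShape.down ℕ) i).map
    ((NatTrans.mapHomologicalComplex
      ((MonoidalCategory.tensoringLeft (ModuleCat R)).map φ) (ComplexShape.down ℕ)).app (KC x))

lemma key_lemma {n : ℕ} (x : Fin n → R) {M₁ M₂ : ModuleCat R} (φ : M₁ ⟶ M₂)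
    (h : ShortComplex.homologyMap (ψdef x φ n) = 0) (m₁ : M₁) (hm : ∀ j, x j • m₁ = 0) :
    φ m₁ ⊗ₜ[R] Ktop R n = (0 : TensorProduct R M₂ (KM R n n)) := by
  have hsub : Subsingleton (KM R n (n+1)) := KM_subsingleton R n (n+1) (Nat.lt_succ_self n)
  have hd₂ : ∀ m : ℕ, (Lcx x M₂).d m n = 0 := by
    intro m
    by_cases hrel : (ComplexShape.down ℕ).Rel m n
    · rw [ComplexShape.down_Rel] at hrel
      subst hrel
      have : Subsingleton ((Lcx x M₂).X (n+1)) :=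
        tensor_subsingleton (M₂ : Type) (KM R n (n+1))
      apply ModuleCat.hom_ext
      apply LinearMap.ext
      intro z
      rw [Subsingleton.elim z 0, map_zero]
      rfl
    · exact (Lcx x M₂).shape m n hrel
  have hf₂ : ((Lcx x M₂).sc n).f = 0 := hd₂ _
  set u₀ : TensorProduct R M₁ (KM R n n) := m₁ ⊗ₜ[R] Ktop R n with hu₀
  have hcycle : ∀ m : ℕ, ((Lcx x M₁).d n m) u₀ = 0 := by
    intro m
    by_cases hrel : (ComplexShape.down ℕ).Rel n m
    · rw [ComplexShape.down_Rel] at hrel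
      subst hrel
      show ((MonoidalCategory.tensoringLeft (ModuleCat R)).obj M₁).map
        ((KC x).d (m+1) m) u₀ = 0
      rw [KC_d x m]
      show (MonoidalCategory.whiskerLeft M₁ (ModuleCat.ofHom (KD x m)))
        (m₁ ⊗ₜ[R] Ktop R (m+1)) = 0
      rw [ModuleCat.MonoidalCategory.whiskerLeft_apply]
      exact tmul_KD_Ktop_eq_zero m x (M₁ : Type) inferInstance inferInstance m₁ hm
    · rw [(Lcx x M₁).shape n m hrel]
      rfl
  have hker : u₀ ∈ LinearMap.ker ((Lcx x M₁).sc n).g.hom := by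
    show ((Lcx x M₁).d n ((ComplexShape.down ℕ).next n)) u₀ = 0
    exact hcycle _
  set u : ((Lcx x M₁).sc n).cycles :=
    (ShortComplex.moduleCatCyclesIso ((Lcx x M₁).sc n)).inv ⟨u₀, hker⟩ with hu
  have hiu : ((Lcx x M₁).sc n).iCycles u = u₀ :=
    congrArg (fun g => g ⟨u₀, hker⟩)
      (ShortComplex.moduleCatCyclesIso_inv_iCycles ((Lcx x M₁).sc n))
  have h7 : ShortComplex.homologyMap (ψdef x φ n) (((Lcx x M₁).sc n).homologyπ u)
      = ((Lcx x M₂).sc n).homologyπ (ShortComplex.cyclesMap (ψdef x φ n) u) :=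
    congrArg (fun g => g u) (ShortComplex.homologyπ_naturality (ψdef x φ n))
  rw [h] at h7
  have hπ : ((Lcx x M₂).sc n).homologyπ (ShortComplex.cyclesMap (ψdef x φ n) u) = 0 :=
    h7.symm
  have hmono : Mono ((Lcx x M₂).sc n).homologyπ := by
    have : IsIso ((Lcx x M₂).sc n).homologyπ := ShortComplex.isIso_homologyπ _ hf₂
    infer_instance
  have hcz : ShortComplex.cyclesMap (ψdef x φ n) u = 0 := by
    rw [ModuleCat.mono_iff_injective] at hmono
    apply hmono
    rw [hπ, map_zero]
  have h6 : ((Lcx x M₂).sc n).iCycles (ShortComplex.cyclesMap (ψdef x φ n) u)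
      = (ψdef x φ n).τ₂ (((Lcx x M₁).sc n).iCycles u) :=
    congrArg (fun g => g u) (ShortComplex.cyclesMap_i (ψdef x φ n))
  rw [hcz, map_zero, hiu] at h6
  have himg : (ψdef x φ n).τ₂ u₀ = 0 := h6.symm
  have hτ : (ψdef x φ n).τ₂ u₀ = φ m₁ ⊗ₜ[R] Ktop R n := by
    show (MonoidalCategory.whiskerRight φ ((KC x).X n)) (m₁ ⊗ₜ[R] Ktop R n) = _
    exact ModuleCat.MonoidalCategory.whiskerRight_apply φ ((KC x).X n) m₁ (Ktop R n)
  rw [hτ] at himg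
  exact himg

end MainGlue

open CategoryTheory

/-- if `J` is generated by a regular sequence, `x₁,…,xᵢ` is a regular
sequence, `cI ⊆ J`, and the map `Torᵢ(R/I, R/(x₁,…,xᵢ)) → Torᵢ(R/J, R/(x₁,…,xᵢ))`
induced by multiplication by `c` is zero, then `c·(I :_R (x₁,…,xᵢ)) ⊆ J`. -/
theorem tor_vanishing_colon {R : Type} [CommRing R] (d i : ℕ)
    (f : Fin d → R) (x : Fin i → R)
    (hf : RingTheory.Sequence.IsRegular R (List.ofFn f))
    (hx : RingTheory.Sequence.IsRegular R (List.ofFn x))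
    (J : Ideal R) (hJ : J = Ideal.span (Set.range f))
    (I : Ideal R) (c : R) (hcI : ∀ y ∈ I, c * y ∈ J)
    (φ : (R ⧸ I) →ₗ[R] (R ⧸ J))
    (hφ : ∀ r : R, φ (Ideal.Quotient.mk I r) = Ideal.Quotient.mk J (c * r))
    (htor : ((Tor (ModuleCat R) i).map (ModuleCat.ofHom φ)).app
        (ModuleCat.of R (R ⧸ Ideal.span (Set.range x))) = 0) :
    ∀ y ∈ Submodule.colon (I : Submodule R R) (Ideal.span (Set.range x) : Submodule R R),
      c * y ∈ J := by
  intro y hy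
  classical
  have hreg : Reg x := reg_of_isRegular x hx.toIsWeaklyRegular
  have h1 : (NatTrans.leftDerived ((MonoidalCategory.tensoringLeft (ModuleCat R)).map
      (ModuleCat.ofHom φ)) i).app (ModuleCat.of R (R ⧸ Ideal.span (Set.range x))) = 0 := htor
  have h2 := CategoryTheory.ProjectiveResolution.leftDerived_app_eq
    ((MonoidalCategory.tensoringLeft (ModuleCat R)).map (ModuleCat.ofHom φ)) (Kres x hreg) i
  rw [h1] at h2
  have h3 : HomologicalComplex.homologyMap
      ((NatTrans.mapHomologicalComplex ((MonoidalCategory.tensoringLeft (ModuleCat R)).map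
        (ModuleCat.ofHom φ)) (ComplexShape.down ℕ)).app (KC x)) i = 0 := by
    have h4 := congrArg (fun g =>
      ((Kres x hreg).isoLeftDerivedObj ((MonoidalCategory.tensoringLeft (ModuleCat R)).obj
        (ModuleCat.of R (R ⧸ I))) i).inv ≫ g ≫
      ((Kres x hreg).isoLeftDerivedObj ((MonoidalCategory.tensoringLeft (ModuleCat R)).obj
        (ModuleCat.of R (R ⧸ J))) i).hom) h2
    have h4' := h4.symm
    simp at h4'
    exact ((Iso.comp_inv_eq _).mp h4').trans Limits.zero_comp
  have h5 : ShortComplex.homologyMap (ψdef x (ModuleCat.ofHom φ) i) = 0 := h3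
  have hysmul : ∀ j : Fin i, x j • (Ideal.Quotient.mk I y)
      = (0 : (ModuleCat.of R (R ⧸ I) : Type)) := by
    intro j
    have h8 : y • (x j) ∈ I := Submodule.mem_colon.mp hy (x j) (Ideal.subset_span ⟨j, rfl⟩)
    have hxy : x j * y ∈ I := by rwa [smul_eq_mul, mul_comm] at h8
    show Ideal.Quotient.mk I (x j * y) = 0
    rwa [Ideal.Quotient.eq_zero_iff_mem]
  have hk := key_lemma x (ModuleCat.ofHom φ) h5 (Ideal.Quotient.mk I y) hysmul
  rw [show (ModuleCat.ofHom φ) (Ideal.Quotient.mk I y) = Ideal.Quotient.mk J (c * y) from hφ y]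
    at hk
  have h9 := congrArg (fun z => (TensorProduct.rid R (R ⧸ J))
    ((LinearMap.lTensor (R ⧸ J) (Ktopcoef R i)) z)) hk
  simp only [LinearMap.lTensor_tmul, map_zero, TensorProduct.rid_tmul, Ktopcoef_Ktop,
    one_smul] at h9
  rwa [← Ideal.Quotient.eq_zero_iff_mem]
end
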